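/- Let f(x,y,z) = β0 + β1 x + β2 y + β3 z + β4 x y + β5 y z + β6 x z + β7 x y z be a trilinear function and ℓ ≥ 0 a natural number. For 0 ≤ i, j, k ≤ 2^ℓ − 1 let ψ^ℓ_{ijk} be the trilinear function determined by the corner values ψ^ℓ_{ijk}(δ,ε,ζ) = f((i+δ)/2^ℓ, (j+ε)/2^ℓ, (k+ζ)/2^ℓ) for δ, ε, ζ ∈ {0,1}. Then the volume of {(x,y,z) ∈ [0,1]³ : f(x,y,z) > 0} equals 8^{−ℓ} · Σ_{i,j,k=0}^{2^ℓ−1} volume of {(u,v,w) ∈ [0,1]³ : ψ^ℓ_{ijk}(u,v,w) > 0}. -/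

import Mathlib

open MeasureTheory
open scoped ENNReal

open Set in
private lemma tri_corner_interp' (P : ℝ → ℝ → ℝ → ℝ)
    (hP : ∃ c0 c1 c2 c3 c4 c5 c6 c7 : ℝ, ∀ u v w : ℝ, P u v w =
      c0 + c1 * u + c2 * v + c3 * w + c4 * (u * v) + c5 * (v * w)
        + c6 * (u * w) + c7 * (u * v * w)) :
    ∀ u v w : ℝ, P u v w =
      (1-u)*(1-v)*(1-w) * P 0 0 0 + u*(1-v)*(1-w) * P 1 0 0
      + (1-u)*v*(1-w) * P 0 1 0 + (1-u)*(1-v)*w * P 0 0 1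
      + u*v*(1-w) * P 1 1 0 + (1-u)*v*w * P 0 1 1
      + u*(1-v)*w * P 1 0 1 + u*v*w * P 1 1 1 := by
  obtain ⟨c0, c1, c2, c3, c4, c5, c6, c7, hc⟩ := hP
  intro u v w
  simp only [hc]; ring

private lemma comp_affine_trilinear' (β0 β1 β2 β3 β4 β5 β6 β7 : ℝ) (f : ℝ → ℝ → ℝ → ℝ)
    (hf : ∀ x y z : ℝ, f x y z =
      β0 + β1 * x + β2 * y + β3 * z + β4 * (x * y) + β5 * (y * z)
        + β6 * (x * z) + β7 * (x * y * z)) (a b c h : ℝ) :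
    ∃ c0 c1 c2 c3 c4 c5 c6 c7 : ℝ, ∀ u v w : ℝ,
      f ((a + u)/h) ((b + v)/h) ((c + w)/h) =
      c0 + c1 * u + c2 * v + c3 * w + c4 * (u * v) + c5 * (v * w)
        + c6 * (u * w) + c7 * (u * v * w) := by
  refine ⟨β0 + β1*(a/h) + β2*(b/h) + β3*(c/h) + β4*(a/h*(b/h)) + β5*(b/h*(c/h))
      + β6*(a/h*(c/h)) + β7*(a/h*(b/h)*(c/h)),
    (β1 + β4*(b/h) + β6*(c/h) + β7*(b/h*(c/h)))/h,
    (β2 + β4*(a/h) + β5*(c/h) + β7*(a/h*(c/h)))/h,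
    (β3 + β5*(b/h) + β6*(a/h) + β7*(a/h*(b/h)))/h,
    (β4 + β7*(c/h))/h^2, (β5 + β7*(a/h))/h^2, (β6 + β7*(b/h))/h^2, β7/h^3,
    fun u v w => ?_⟩
  rw [hf]; ring

open Set in
private lemma plane1_null' (c : ℝ) : volume {p : ℝ × ℝ × ℝ | p.1 = c} = 0 := by
  have : {p : ℝ × ℝ × ℝ | p.1 = c} = ({c} : Set ℝ) ×ˢ (univ : Set (ℝ × ℝ)) := by
    ext ⟨x, y, z⟩; simp [Set.mem_prod, eq_comm]
  rw [this, Measure.volume_eq_prod, Measure.prod_prod]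
  simp

open Set in
private lemma plane2_null' (c : ℝ) : volume {p : ℝ × ℝ × ℝ | p.2.1 = c} = 0 := by
  have : {p : ℝ × ℝ × ℝ | p.2.1 = c}
      = (univ : Set ℝ) ×ˢ (({c} : Set ℝ) ×ˢ (univ : Set ℝ)) := by
    ext ⟨x, y, z⟩; simp [Set.mem_prod, eq_comm]
  rw [this, Measure.volume_eq_prod, Measure.prod_prod, Measure.volume_eq_prod,
    Measure.prod_prod]
  simp

open Set in
private lemma plane3_null' (c : ℝ) : volume {p : ℝ × ℝ × ℝ | p.2.2 = c} = 0 := by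
  have : {p : ℝ × ℝ × ℝ | p.2.2 = c}
      = (univ : Set ℝ) ×ˢ ((univ : Set ℝ) ×ˢ ({c} : Set ℝ)) := by
    ext ⟨x, y, z⟩; simp [Set.mem_prod, eq_comm]
  rw [this, Measure.volume_eq_prod, Measure.prod_prod, Measure.volume_eq_prod,
    Measure.prod_prod]
  simp

open Set in
private lemma vol_Icc_eq_Ico' (g : ℝ × ℝ × ℝ → ℝ) :
    volume {p : ℝ × ℝ × ℝ | p.1 ∈ Icc (0:ℝ) 1 ∧ p.2.1 ∈ Icc (0:ℝ) 1 ∧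
        p.2.2 ∈ Icc (0:ℝ) 1 ∧ 0 < g p}
      = volume {p : ℝ × ℝ × ℝ | p.1 ∈ Ico (0:ℝ) 1 ∧ p.2.1 ∈ Ico (0:ℝ) 1 ∧
        p.2.2 ∈ Ico (0:ℝ) 1 ∧ 0 < g p} := by
  set A := {p : ℝ × ℝ × ℝ | p.1 ∈ Icc (0:ℝ) 1 ∧ p.2.1 ∈ Icc (0:ℝ) 1 ∧
        p.2.2 ∈ Icc (0:ℝ) 1 ∧ 0 < g p}
  set B := {p : ℝ × ℝ × ℝ | p.1 ∈ Ico (0:ℝ) 1 ∧ p.2.1 ∈ Ico (0:ℝ) 1 ∧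
        p.2.2 ∈ Ico (0:ℝ) 1 ∧ 0 < g p}
  have hBA : B ⊆ A := fun p hp =>
    ⟨Ico_subset_Icc_self hp.1, Ico_subset_Icc_self hp.2.1,
      Ico_subset_Icc_self hp.2.2.1, hp.2.2.2⟩
  have hN : volume ({p : ℝ × ℝ × ℝ | p.1 = 1} ∪ {p : ℝ × ℝ × ℝ | p.2.1 = 1}
      ∪ {p : ℝ × ℝ × ℝ | p.2.2 = 1}) = 0 := by
    refine measure_union_null (measure_union_null ?_ ?_) ?_ <;>
      simp [plane1_null', plane2_null', plane3_null']
  have hsub : A ⊆ B ∪ ({p : ℝ × ℝ × ℝ | p.1 = 1} ∪ {p : ℝ × ℝ × ℝ | p.2.1 = 1}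
      ∪ {p : ℝ × ℝ × ℝ | p.2.2 = 1}) := by
    rintro p ⟨h1, h2, h3, h4⟩
    rcases eq_or_lt_of_le h1.2 with e | l1
    · exact Or.inr (Or.inl (Or.inl e))
    rcases eq_or_lt_of_le h2.2 with e | l2
    · exact Or.inr (Or.inl (Or.inr e))
    rcases eq_or_lt_of_le h3.2 with e | l3
    · exact Or.inr (Or.inr e)
    exact Or.inl ⟨⟨h1.1, l1⟩, ⟨h2.1, l2⟩, ⟨h3.1, l3⟩, h4⟩
  refine le_antisymm ?_ (measure_mono hBA)
  calc volume A ≤ volume (B ∪ _) := measure_mono hsub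
    _ ≤ volume B + _ := measure_union_le _ _
    _ = volume B := by rw [hN, add_zero]

open Set in
private lemma exists_cell' (n : ℕ) (hn : 0 < n) (x : ℝ) (hx : x ∈ Ico (0:ℝ) 1) :
    ∃ i : ℕ, i < n ∧ x ∈ Ico ((i:ℝ)/n) (((i:ℝ)+1)/n) := by
  have hn' : (0:ℝ) < n := by exact_mod_cast hn
  have hx0 : (0:ℝ) ≤ x * n := mul_nonneg hx.1 hn'.le
  refine ⟨⌊x * n⌋₊, ?_, ?_, ?_⟩
  · have h1 : x * n < n := by
      calc x * n < 1 * n := mul_lt_mul_of_pos_right hx.2 hn'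
        _ = n := one_mul _
    exact (Nat.floor_lt hx0).mpr (by simpa using h1)
  · rw [div_le_iff₀ hn']
    exact Nat.floor_le hx0
  · rw [lt_div_iff₀ hn']
    exact Nat.lt_floor_add_one (x * n)

open Set in
private lemma cell_mono' {n a b : ℕ} (hn : 0 < n) (hab : a < b) {x : ℝ}
    (h1 : x < ((a:ℝ)+1)/n) (h2 : ((b:ℝ)/n) ≤ x) : False := by
  have hn' : (0:ℝ) < n := by exact_mod_cast hn
  have hab' : ((a:ℝ)+1) ≤ (b:ℝ) := by exact_mod_cast hab
  have : ((a:ℝ)+1)/n ≤ (b:ℝ)/n := by gcongr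
  linarith

open Set in
private lemma cell_eq' {n a b : ℕ} (hn : 0 < n) {x : ℝ}
    (ha : x ∈ Ico ((a:ℝ)/n) (((a:ℝ)+1)/n)) (hb : x ∈ Ico ((b:ℝ)/n) (((b:ℝ)+1)/n)) :
    a = b := by
  rcases lt_trichotomy a b with h | h | h
  · exact absurd (cell_mono' hn h ha.2 hb.1) (by simp)
  · exact h
  · exact absurd (cell_mono' hn h hb.2 ha.1) (by simp)

open Set in
private lemma partition_vol' (F : ℝ × ℝ × ℝ → ℝ) (hF : Continuous F) (n : ℕ) (hn : 0 < n) :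
    volume {p : ℝ × ℝ × ℝ | p.1 ∈ Ico (0:ℝ) 1 ∧ p.2.1 ∈ Ico (0:ℝ) 1 ∧
        p.2.2 ∈ Ico (0:ℝ) 1 ∧ 0 < F p}
    = ∑ i ∈ Finset.range n, ∑ j ∈ Finset.range n, ∑ k ∈ Finset.range n,
        volume {p : ℝ × ℝ × ℝ | p.1 ∈ Ico ((i:ℝ)/n) (((i:ℝ)+1)/n)
          ∧ p.2.1 ∈ Ico ((j:ℝ)/n) (((j:ℝ)+1)/n)
          ∧ p.2.2 ∈ Ico ((k:ℝ)/n) (((k:ℝ)+1)/n) ∧ 0 < F p} := by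
  have hn' : (0:ℝ) < n := by exact_mod_cast hn
  set B : ℕ × ℕ × ℕ → Set (ℝ × ℝ × ℝ) := fun q =>
    {p : ℝ × ℝ × ℝ | p.1 ∈ Ico ((q.1:ℝ)/n) (((q.1:ℝ)+1)/n)
      ∧ p.2.1 ∈ Ico ((q.2.1:ℝ)/n) (((q.2.1:ℝ)+1)/n)
      ∧ p.2.2 ∈ Ico ((q.2.2:ℝ)/n) (((q.2.2:ℝ)+1)/n) ∧ 0 < F p} with hB
  set s : Finset (ℕ × ℕ × ℕ) :=
    Finset.range n ×ˢ (Finset.range n ×ˢ Finset.range n) with hs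
  have hmeas : ∀ q : ℕ × ℕ × ℕ, MeasurableSet (B q) := by
    intro q
    have : B q = (fun p : ℝ × ℝ × ℝ => p.1) ⁻¹' Ico ((q.1:ℝ)/n) (((q.1:ℝ)+1)/n)
        ∩ ((fun p : ℝ × ℝ × ℝ => p.2.1) ⁻¹' Ico ((q.2.1:ℝ)/n) (((q.2.1:ℝ)+1)/n)
        ∩ ((fun p : ℝ × ℝ × ℝ => p.2.2) ⁻¹' Ico ((q.2.2:ℝ)/n) (((q.2.2:ℝ)+1)/n)
        ∩ F ⁻¹' Ioi 0)) := rfl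
    rw [this]
    exact (measurable_fst measurableSet_Ico).inter
      ((measurable_snd.fst measurableSet_Ico).inter
        ((measurable_snd.snd measurableSet_Ico).inter
          (hF.measurable measurableSet_Ioi)))
  have hdisj : (↑s : Set (ℕ × ℕ × ℕ)).PairwiseDisjoint B := by
    rintro ⟨i, j, k⟩ _ ⟨i', j', k'⟩ _ hne
    rw [Function.onFun, Set.disjoint_left]
    intro p hp hp'
    exact hne (by
      obtain ⟨h1, h2, h3, _⟩ := hp
      obtain ⟨h1', h2', h3', _⟩ := hp'
      have e1 : i = i' := cell_eq' hn h1 h1'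
      have e2 : j = j' := cell_eq' hn h2 h2'
      have e3 : k = k' := cell_eq' hn h3 h3'
      subst e1; subst e2; subst e3; rfl)
  have hcover : {p : ℝ × ℝ × ℝ | p.1 ∈ Ico (0:ℝ) 1 ∧ p.2.1 ∈ Ico (0:ℝ) 1 ∧
        p.2.2 ∈ Ico (0:ℝ) 1 ∧ 0 < F p} = ⋃ q ∈ s, B q := by
    ext p
    simp only [Set.mem_iUnion, Set.mem_setOf_eq]
    constructor
    · rintro ⟨h1, h2, h3, h4⟩
      obtain ⟨i, hi, hxi⟩ := exists_cell' n hn p.1 h1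
      obtain ⟨j, hj, hxj⟩ := exists_cell' n hn p.2.1 h2
      obtain ⟨k, hk, hxk⟩ := exists_cell' n hn p.2.2 h3
      exact ⟨(i, j, k), by simp [hs, Finset.mem_product, hi, hj, hk],
        ⟨hxi, hxj, hxk, h4⟩⟩
    · rintro ⟨⟨i, j, k⟩, hq, h1, h2, h3, h4⟩
      simp only [hs, Finset.mem_product, Finset.mem_range] at hq
      obtain ⟨hi, hj, hk⟩ := hq
      have key : ∀ m : ℕ, m < n → ∀ x : ℝ,
          x ∈ Ico ((m:ℝ)/n) (((m:ℝ)+1)/n) → x ∈ Ico (0:ℝ) 1 := by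
        intro m hm x hx
        constructor
        · exact le_trans (by positivity) hx.1
        · have : ((m:ℝ)+1)/n ≤ 1 := by
            rw [div_le_one hn']
            exact_mod_cast Nat.succ_le_of_lt hm
          exact lt_of_lt_of_le hx.2 this
      exact ⟨key i hi _ h1, key j hj _ h2, key k hk _ h3, h4⟩
  rw [hcover, measure_biUnion_finset hdisj (fun q _ => hmeas q)]
  rw [hs, Finset.sum_product]
  simp only [Finset.sum_product]
  rfl

private instance : (volume : Measure (ℝ × ℝ × ℝ)).IsAddHaarMeasure := by
  rw [Measure.volume_eq_prod]
  exact Measure.prod.instIsAddHaarMeasure _ _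

open Set in
private lemma aff_mem_Ico' {n : ℝ} (hn : 0 < n) (a x : ℝ) :
    (a + x)/n ∈ Ico (a/n) ((a+1)/n) ↔ x ∈ Ico (0:ℝ) 1 := by
  rw [mem_Ico, mem_Ico, div_le_div_iff_of_pos_right hn, div_lt_div_iff_of_pos_right hn]
  constructor <;> rintro ⟨h1, h2⟩ <;> constructor <;> linarith

open Set in
private lemma cell_affine_vol' {n : ℝ} (hn : 0 < n) (a b c : ℝ) (S : Set (ℝ × ℝ × ℝ)) :
    volume ((fun p : ℝ × ℝ × ℝ =>
        (((a + p.1)/n : ℝ), ((b + p.2.1)/n : ℝ), ((c + p.2.2)/n : ℝ))) ⁻¹' S)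
      = ENNReal.ofReal (n^3) * volume S := by
  have hcomp : (fun p : ℝ × ℝ × ℝ =>
        (((a + p.1)/n : ℝ), ((b + p.2.1)/n : ℝ), ((c + p.2.2)/n : ℝ)))
      = (fun q : ℝ × ℝ × ℝ => q + (a/n, b/n, c/n)) ∘ (fun p : ℝ × ℝ × ℝ => n⁻¹ • p) := by
    funext p
    show _ = (n⁻¹ • p.1 + a/n, n⁻¹ • p.2.1 + b/n, n⁻¹ • p.2.2 + c/n)
    have hn0 : n ≠ 0 := hn.ne'
    refine Prod.ext ?_ (Prod.ext ?_ ?_) <;> simp [smul_eq_mul] <;> field_simp <;> ring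
  rw [hcomp, Set.preimage_comp]
  rw [Measure.addHaar_preimage_smul volume (inv_ne_zero hn.ne') _]
  rw [measure_preimage_add_right volume _ S]
  congr 1
  have h3 : Module.finrank ℝ (ℝ × ℝ × ℝ) = 3 := by simp
  rw [h3]
  rw [inv_pow, inv_inv, abs_of_pos (by positivity)]

/-- The 3D analytical volume estimate is consistent under ℓ levels of mesh
refinement with trilinear interpolation: the volume of {f > 0} in the unit
cube equals 8^{−ℓ} times the sum over all 8^ℓ subcells of the volumes of
{ψ^ℓ_{ijk} > 0}. -/
theorem trilinear_volume_consistent_many_levels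
    (β0 β1 β2 β3 β4 β5 β6 β7 : ℝ) (f : ℝ → ℝ → ℝ → ℝ)
    (hf : ∀ x y z : ℝ, f x y z =
      β0 + β1 * x + β2 * y + β3 * z + β4 * (x * y) + β5 * (y * z)
        + β6 * (x * z) + β7 * (x * y * z))
    (ℓ : ℕ) (ψ : ℕ → ℕ → ℕ → ℝ → ℝ → ℝ → ℝ)
    (hψtril : ∀ i j k : ℕ, i < 2 ^ ℓ → j < 2 ^ ℓ → k < 2 ^ ℓ →
      ∃ γ0 γ1 γ2 γ3 γ4 γ5 γ6 γ7 : ℝ,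
      ∀ u v w : ℝ, ψ i j k u v w =
        γ0 + γ1 * u + γ2 * v + γ3 * w + γ4 * (u * v) + γ5 * (v * w)
          + γ6 * (u * w) + γ7 * (u * v * w))
    (hψcorner : ∀ i j k : ℕ, i < 2 ^ ℓ → j < 2 ^ ℓ → k < 2 ^ ℓ →
      ∀ δ ε ζ : Fin 2,
      ψ i j k ((δ : ℕ) : ℝ) ((ε : ℕ) : ℝ) ((ζ : ℕ) : ℝ)
        = f (((i : ℝ) + ((δ : ℕ) : ℝ)) / 2 ^ ℓ)
            (((j : ℝ) + ((ε : ℕ) : ℝ)) / 2 ^ ℓ)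
            (((k : ℝ) + ((ζ : ℕ) : ℝ)) / 2 ^ ℓ)) :
    volume {p : ℝ × ℝ × ℝ | p.1 ∈ Set.Icc (0 : ℝ) 1 ∧
        p.2.1 ∈ Set.Icc (0 : ℝ) 1 ∧ p.2.2 ∈ Set.Icc (0 : ℝ) 1 ∧
        0 < f p.1 p.2.1 p.2.2}
      = ((8 : ℝ≥0∞) ^ ℓ)⁻¹ * ∑ i ∈ Finset.range (2 ^ ℓ),
          ∑ j ∈ Finset.range (2 ^ ℓ), ∑ k ∈ Finset.range (2 ^ ℓ),
            volume {p : ℝ × ℝ × ℝ | p.1 ∈ Set.Icc (0 : ℝ) 1 ∧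
              p.2.1 ∈ Set.Icc (0 : ℝ) 1 ∧ p.2.2 ∈ Set.Icc (0 : ℝ) 1 ∧
              0 < ψ i j k p.1 p.2.1 p.2.2} := by
  classical
  set n : ℕ := 2 ^ ℓ with hn_def
  have hn : 0 < n := pow_pos (by norm_num : (0:ℕ) < 2) ℓ
  have hn' : (0:ℝ) < (n:ℝ) := by exact_mod_cast hn
  have hcast : ((n:ℕ):ℝ) = (2:ℝ) ^ ℓ := by
    rw [hn_def]; push_cast; ring
  set F : ℝ × ℝ × ℝ → ℝ := fun p => f p.1 p.2.1 p.2.2 with hF_def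
  have hFc : Continuous F := by
    have : F = fun p : ℝ × ℝ × ℝ =>
        β0 + β1 * p.1 + β2 * p.2.1 + β3 * p.2.2 + β4 * (p.1 * p.2.1)
          + β5 * (p.2.1 * p.2.2) + β6 * (p.1 * p.2.2) + β7 * (p.1 * p.2.1 * p.2.2) := by
      funext p; exact hf p.1 p.2.1 p.2.2
    rw [this]; fun_prop
  -- pointwise identity for ψ on each cell
  have hψeq : ∀ i j k : ℕ, i < n → j < n → k < n → ∀ u v w : ℝ,
      ψ i j k u v w
        = f (((i:ℝ) + u)/(n:ℝ)) (((j:ℝ) + v)/(n:ℝ)) (((k:ℝ) + w)/(n:ℝ)) := by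
    intro i j k hi hj hk u v w
    rw [hcast]
    have hC := hψcorner i j k hi hj hk
    have h1 := tri_corner_interp' (ψ i j k) (hψtril i j k hi hj hk) u v w
    have h2 := tri_corner_interp' (fun u v w =>
        f (((i:ℝ) + u)/2^ℓ) (((j:ℝ) + v)/2^ℓ) (((k:ℝ) + w)/2^ℓ))
      (comp_affine_trilinear' β0 β1 β2 β3 β4 β5 β6 β7 f hf _ _ _ _) u v w
    rw [h1, h2]
    have e0 : ((0 : Fin 2) : ℕ) = 0 := rfl
    have e1 : ((1 : Fin 2) : ℕ) = 1 := rfl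
    have c000 := hC 0 0 0; have c100 := hC 1 0 0; have c010 := hC 0 1 0
    have c001 := hC 0 0 1; have c110 := hC 1 1 0; have c011 := hC 0 1 1
    have c101 := hC 1 0 1; have c111 := hC 1 1 1
    simp only [e0, e1, Nat.cast_zero, Nat.cast_one]
      at c000 c100 c010 c001 c110 c011 c101 c111
    rw [c000, c100, c010, c001, c110, c011, c101, c111]
  -- the subcell sets for f
  set B : ℕ → ℕ → ℕ → Set (ℝ × ℝ × ℝ) := fun i j k =>
    {p : ℝ × ℝ × ℝ | p.1 ∈ Set.Ico ((i:ℝ)/(n:ℝ)) (((i:ℝ)+1)/(n:ℝ))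
      ∧ p.2.1 ∈ Set.Ico ((j:ℝ)/(n:ℝ)) (((j:ℝ)+1)/(n:ℝ))
      ∧ p.2.2 ∈ Set.Ico ((k:ℝ)/(n:ℝ)) (((k:ℝ)+1)/(n:ℝ)) ∧ 0 < F p} with hB_def
  -- left hand side
  have hLHS : volume {p : ℝ × ℝ × ℝ | p.1 ∈ Set.Icc (0 : ℝ) 1 ∧
        p.2.1 ∈ Set.Icc (0 : ℝ) 1 ∧ p.2.2 ∈ Set.Icc (0 : ℝ) 1 ∧
        0 < f p.1 p.2.1 p.2.2}
      = ∑ i ∈ Finset.range n, ∑ j ∈ Finset.range n, ∑ k ∈ Finset.range n,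
          volume (B i j k) := by
    calc volume {p : ℝ × ℝ × ℝ | p.1 ∈ Set.Icc (0 : ℝ) 1 ∧
        p.2.1 ∈ Set.Icc (0 : ℝ) 1 ∧ p.2.2 ∈ Set.Icc (0 : ℝ) 1 ∧
        0 < f p.1 p.2.1 p.2.2}
        = volume {p : ℝ × ℝ × ℝ | p.1 ∈ Set.Ico (0 : ℝ) 1 ∧
            p.2.1 ∈ Set.Ico (0 : ℝ) 1 ∧ p.2.2 ∈ Set.Ico (0 : ℝ) 1 ∧ 0 < F p} :=
          vol_Icc_eq_Ico' F
      _ = _ := partition_vol' F hFc n hn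
  -- per-cell identity
  have hcell : ∀ i ∈ Finset.range n, ∀ j ∈ Finset.range n, ∀ k ∈ Finset.range n,
      volume {p : ℝ × ℝ × ℝ | p.1 ∈ Set.Icc (0 : ℝ) 1 ∧
          p.2.1 ∈ Set.Icc (0 : ℝ) 1 ∧ p.2.2 ∈ Set.Icc (0 : ℝ) 1 ∧
          0 < ψ i j k p.1 p.2.1 p.2.2}
        = (8 : ℝ≥0∞) ^ ℓ * volume (B i j k) := by
    intro i hi j hj k hk
    rw [Finset.mem_range] at hi hj hk
    have step1 : volume {p : ℝ × ℝ × ℝ | p.1 ∈ Set.Icc (0 : ℝ) 1 ∧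
          p.2.1 ∈ Set.Icc (0 : ℝ) 1 ∧ p.2.2 ∈ Set.Icc (0 : ℝ) 1 ∧
          0 < ψ i j k p.1 p.2.1 p.2.2}
        = volume {p : ℝ × ℝ × ℝ | p.1 ∈ Set.Ico (0 : ℝ) 1 ∧
          p.2.1 ∈ Set.Ico (0 : ℝ) 1 ∧ p.2.2 ∈ Set.Ico (0 : ℝ) 1 ∧
          0 < ψ i j k p.1 p.2.1 p.2.2} :=
      vol_Icc_eq_Ico' (fun p => ψ i j k p.1 p.2.1 p.2.2)
    have hseteq : {p : ℝ × ℝ × ℝ | p.1 ∈ Set.Ico (0 : ℝ) 1 ∧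
          p.2.1 ∈ Set.Ico (0 : ℝ) 1 ∧ p.2.2 ∈ Set.Ico (0 : ℝ) 1 ∧
          0 < ψ i j k p.1 p.2.1 p.2.2}
        = (fun p : ℝ × ℝ × ℝ =>
            (((((i:ℝ)) + p.1)/(n:ℝ) : ℝ), (((j:ℝ) + p.2.1)/(n:ℝ) : ℝ),
              (((k:ℝ) + p.2.2)/(n:ℝ) : ℝ))) ⁻¹' (B i j k) := by
      ext ⟨x, y, z⟩
      simp only [Set.mem_preimage, Set.mem_setOf_eq, hB_def]
      rw [aff_mem_Ico' hn', aff_mem_Ico' hn', aff_mem_Ico' hn']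
      have hψ' : ψ i j k x y z
          = f (((i:ℝ) + x)/(n:ℝ)) (((j:ℝ) + y)/(n:ℝ)) (((k:ℝ) + z)/(n:ℝ)) :=
        hψeq i j k hi hj hk x y z
      simp only [hF_def]
      constructor
      · rintro ⟨h1, h2, h3, h4⟩
        exact ⟨h1, h2, h3, by rw [← hψ']; exact h4⟩
      · rintro ⟨h1, h2, h3, h4⟩
        exact ⟨h1, h2, h3, by rw [hψ']; exact h4⟩
    have step2 := cell_affine_vol' hn' ((i:ℝ)) ((j:ℝ)) ((k:ℝ)) (B i j k)
    have hpow : ENNReal.ofReal (((n:ℕ):ℝ)^3) = (8 : ℝ≥0∞) ^ ℓ := by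
      have h8 : ((n:ℕ):ℝ)^3 = (8:ℝ)^ℓ := by
        rw [hcast, ← pow_mul, mul_comm, pow_mul]; norm_num
      rw [h8, ENNReal.ofReal_pow (by norm_num)]
      norm_num
    rw [step1, hseteq, step2, hpow]
  rw [hLHS]
  rw [Finset.sum_congr rfl (fun i hi => Finset.sum_congr rfl (fun j hj =>
    Finset.sum_congr rfl (fun k hk => hcell i hi j hj k hk)))]
  simp only [← Finset.mul_sum]
  rw [← mul_assoc, ENNReal.inv_mul_cancel (pow_ne_zero ℓ (by norm_num))
    (ENNReal.pow_ne_top (by simp)), one_mul]
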